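/- Let μ > 0, let σ^r ∈ Δ^n × Δ^m be any reference profile, and let σ̂ = (x̂, ŷ) be a saddle point of the corresponding SCCP. Then the exploitability of σ̂ satisfies ε(σ̂) ≤ 2μ. -/
import Mathlib


open Finset

/-- Squared Euclidean norm of a vector. -/
noncomputable def sqnorm {k : ℕ} (v : Fin k → ℝ) : ℝ := ∑ i, (v i) ^ 2

/-- Euclidean norm of a concatenated profile vector in ℝ^(k+l). -/
noncomputable def pnorm {k l : ℕ} (v : Fin k → ℝ) (w : Fin l → ℝ) : ℝ :=
  Real.sqrt (sqnorm v + sqnorm w)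

/-- Bilinear payoff xᵀUy. -/
def payoff {k l : ℕ} (U : Matrix (Fin k) (Fin l) ℝ) (x : Fin k → ℝ) (y : Fin l → ℝ) : ℝ :=
  ∑ i, ∑ j, x i * U i j * y j

/-- Regularized SCCP objective G(x,y) = -xᵀUy + μ/2 ‖x - xʳ‖² - μ/2 ‖y - yʳ‖². -/
noncomputable def sccpObj {k l : ℕ} (U : Matrix (Fin k) (Fin l) ℝ) (μ : ℝ)
    (xr : Fin k → ℝ) (yr : Fin l → ℝ) (x : Fin k → ℝ) (y : Fin l → ℝ) : ℝ :=
  -(payoff U x y) + μ / 2 * sqnorm (x - xr) - μ / 2 * sqnorm (y - yr)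

/-- (x̂, ŷ) is a saddle point of the SCCP with weight μ and reference (xr, yr). -/
def IsSaddle {k l : ℕ} (U : Matrix (Fin k) (Fin l) ℝ) (μ : ℝ)
    (xr : Fin k → ℝ) (yr : Fin l → ℝ) (xh : Fin k → ℝ) (yh : Fin l → ℝ) : Prop :=
  xh ∈ stdSimplex ℝ (Fin k) ∧ yh ∈ stdSimplex ℝ (Fin l) ∧
  (∀ y ∈ stdSimplex ℝ (Fin l), sccpObj U μ xr yr xh y ≤ sccpObj U μ xr yr xh yh) ∧
  (∀ x ∈ stdSimplex ℝ (Fin k), sccpObj U μ xr yr xh yh ≤ sccpObj U μ xr yr x yh)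

/-- (x*, y*) is a Nash equilibrium of the zero-sum game with payoff matrix U. -/
def IsNash {k l : ℕ} (U : Matrix (Fin k) (Fin l) ℝ)
    (xs : Fin k → ℝ) (ys : Fin l → ℝ) : Prop :=
  xs ∈ stdSimplex ℝ (Fin k) ∧ ys ∈ stdSimplex ℝ (Fin l) ∧
  (∀ x ∈ stdSimplex ℝ (Fin k), payoff U x ys ≤ payoff U xs ys) ∧
  (∀ y ∈ stdSimplex ℝ (Fin l), payoff U xs ys ≤ payoff U xs y)

/-- Exploitability ε(σ) = max_{x'} x'ᵀUy - min_{y'} xᵀUy'. -/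
noncomputable def exploit {k l : ℕ} (U : Matrix (Fin k) (Fin l) ℝ)
    (x : Fin k → ℝ) (y : Fin l → ℝ) : ℝ :=
  sSup ((fun x' => payoff U x' y) '' stdSimplex ℝ (Fin k)) -
  sInf ((fun y' => payoff U x y') '' stdSimplex ℝ (Fin l))

/-- Transformed loss for the x-player: ℓ_x = -Uy + μ(x - xʳ). -/
noncomputable def lossX {k l : ℕ} (U : Matrix (Fin k) (Fin l) ℝ) (μ : ℝ)
    (xr : Fin k → ℝ) (x : Fin k → ℝ) (y : Fin l → ℝ) : Fin k → ℝ :=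
  fun i => -(∑ j, U i j * y j) + μ * (x i - xr i)

/-- Transformed loss for the y-player: ℓ_y = Uᵀx + μ(y - yʳ). -/
noncomputable def lossY {k l : ℕ} (U : Matrix (Fin k) (Fin l) ℝ) (μ : ℝ)
    (yr : Fin l → ℝ) (x : Fin k → ℝ) (y : Fin l → ℝ) : Fin l → ℝ :=
  fun j => (∑ i, U i j * x i) + μ * (y j - yr j)

/-- Immediate regret r = ⟨ℓ, p⟩·𝟏 - ℓ. -/
noncomputable def imRegret {k : ℕ} (ℓ : Fin k → ℝ) (p : Fin k → ℝ) : Fin k → ℝ :=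
  fun i => (∑ i', ℓ i' * p i') - ℓ i


lemma sum_sq_le_one {k : ℕ} {v : Fin k → ℝ} (hv : v ∈ stdSimplex ℝ (Fin k)) :
    ∑ i, (v i) ^ 2 ≤ 1 := by
  have h1 : ∀ i, v i ≤ 1 := by
    intro i
    have := Finset.single_le_sum (f := v) (fun j _ => hv.1 j) (Finset.mem_univ i)
    rw [hv.2] at this; exact this
  calc ∑ i, (v i) ^ 2 ≤ ∑ i, v i := by
        apply Finset.sum_le_sum
        intro i _
        nlinarith [hv.1 i, h1 i]
    _ = 1 := hv.2

lemma sqnorm_sub_le_two {k : ℕ} {v w : Fin k → ℝ}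
    (hv : v ∈ stdSimplex ℝ (Fin k)) (hw : w ∈ stdSimplex ℝ (Fin k)) :
    sqnorm (v - w) ≤ 2 := by
  have h : sqnorm (v - w) ≤ (∑ i, (v i) ^ 2) + (∑ i, (w i) ^ 2) := by
    unfold sqnorm
    rw [← Finset.sum_add_distrib]
    apply Finset.sum_le_sum
    intro i _
    have := hv.1 i; have := hw.1 i
    simp only [Pi.sub_apply]
    nlinarith
  have := sum_sq_le_one hv
  have := sum_sq_le_one hw
  linarith

lemma sqnorm_nonneg' {k : ℕ} (v : Fin k → ℝ) : 0 ≤ sqnorm v :=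
  Finset.sum_nonneg fun i _ => sq_nonneg _

/-- The exploitability of the SCCP saddle point is at most 2μ. -/
theorem exploitability_le_two_mu
    {n m : ℕ} (hn : 0 < n) (hm : 0 < m)
    (U : Matrix (Fin n) (Fin m) ℝ) (μ : ℝ) (hμ : 0 < μ)
    (hNE : ∃ xs ys, IsNash U xs ys)
    (xr : Fin n → ℝ) (yr : Fin m → ℝ)
    (hxr : xr ∈ stdSimplex ℝ (Fin n)) (hyr : yr ∈ stdSimplex ℝ (Fin m))
    (xh : Fin n → ℝ) (yh : Fin m → ℝ)
    (hsad : IsSaddle U μ xr yr xh yh) :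
    exploit U xh yh ≤ 2 * μ := by
  obtain ⟨hxh, hyh, hy, hx⟩ := hsad
  set P := payoff U xh yh with hP
  -- upper bound on each payoff U x' yh
  have hsupb : ∀ x' ∈ stdSimplex ℝ (Fin n), payoff U x' yh ≤ P + μ := by
    intro x' hx'
    have h := hx x' hx'
    unfold sccpObj at h
    have h1 : sqnorm (x' - xr) ≤ 2 := sqnorm_sub_le_two hx' hxr
    have h2 : 0 ≤ sqnorm (xh - xr) := sqnorm_nonneg' _
    nlinarith
  have hinfb : ∀ y' ∈ stdSimplex ℝ (Fin m), P - μ ≤ payoff U xh y' := by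
    intro y' hy'
    have h := hy y' hy'
    unfold sccpObj at h
    have h1 : sqnorm (y' - yr) ≤ 2 := sqnorm_sub_le_two hy' hyr
    have h2 : 0 ≤ sqnorm (yh - yr) := sqnorm_nonneg' _
    nlinarith
  unfold exploit
  have hS : sSup ((fun x' => payoff U x' yh) '' stdSimplex ℝ (Fin n)) ≤ P + μ := by
    apply csSup_le
    · exact ⟨payoff U xh yh, ⟨xh, hxh, rfl⟩⟩
    · rintro _ ⟨x', hx', rfl⟩
      exact hsupb x' hx'
  have hI : P - μ ≤ sInf ((fun y' => payoff U xh y') '' stdSimplex ℝ (Fin m)) := by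
    apply le_csInf
    · exact ⟨payoff U xh yh, ⟨yh, hyh, rfl⟩⟩
    · rintro _ ⟨y', hy', rfl⟩
      exact hinfb y' hy'
  linarith
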